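/- Let $\mu$ be a Borel probability measure with bounded support on a nonempty Borel class $\mathcal{K}_* \subseteq \mathcal{K}^n$, let $K$ be the convex body with $h_K = \int h_P\, \mu(dP)$, and let $Q$ be any finite nonnegative Minkowski combination of bodies in $\operatorname{supp}\mu$. Then $\operatorname{pspan} Q \subseteq \operatorname{pspan} K$. -/

import Mathlib

open scoped Pointwise RealInnerProductSpace NNReal
open MeasureTheory

noncomputable section

/-- Support function of a convex body. -/
def sfn {n : ℕ} (K : ConvexBody (EuclideanSpace ℝ (Fin n))) (u : EuclideanSpace ℝ (Fin n)) : ℝ :=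
  sSup ((fun x => ⟪x, u⟫) '' (K : Set (EuclideanSpace ℝ (Fin n))))

/-- The support of a measure on a topological space. -/
def msupport {X : Type*} [TopologicalSpace X] [MeasurableSpace X] (μ : Measure X) : Set X :=
  {x | ∀ U : Set X, IsOpen U → x ∈ U → μ U ≠ 0}

/-- `pspan A = span (A - A)`, the linear subspace parallel to the affine hull of `A`. -/
def pspan {n : ℕ} (A : Set (EuclideanSpace ℝ (Fin n))) : Submodule ℝ (EuclideanSpace ℝ (Fin n)) :=
  Submodule.span ℝ (A - A)

section Aux

variable {n : ℕ}

lemma sfn_bddAbove (K : ConvexBody (EuclideanSpace ℝ (Fin n))) (u : EuclideanSpace ℝ (Fin n)) :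
    BddAbove ((fun x => ⟪x, u⟫) '' (K : Set (EuclideanSpace ℝ (Fin n)))) :=
  (K.isCompact.image (continuous_id.inner continuous_const)).bddAbove

lemma inner_le_sfn {K : ConvexBody (EuclideanSpace ℝ (Fin n))} {x : EuclideanSpace ℝ (Fin n)}
    (hx : x ∈ (K : Set (EuclideanSpace ℝ (Fin n)))) (u : EuclideanSpace ℝ (Fin n)) :
    ⟪x, u⟫ ≤ sfn K u :=
  le_csSup (sfn_bddAbove K u) ⟨x, hx, rfl⟩

lemma sfn_le {K : ConvexBody (EuclideanSpace ℝ (Fin n))} {u : EuclideanSpace ℝ (Fin n)} {a : ℝ}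
    (h : ∀ x ∈ (K : Set (EuclideanSpace ℝ (Fin n))), ⟪x, u⟫ ≤ a) : sfn K u ≤ a :=
  csSup_le (K.nonempty.image _) (by rintro _ ⟨x, hx, rfl⟩; exact h x hx)

lemma sfn_le_add (K L : ConvexBody (EuclideanSpace ℝ (Fin n))) (u : EuclideanSpace ℝ (Fin n)) :
    sfn K u ≤ sfn L u + ‖u‖ * dist K L := by
  apply sfn_le
  intro x hx
  obtain ⟨y, hy, hxy⟩ := L.isCompact.exists_infDist_eq_dist L.nonempty x
  have h1 : Metric.infDist x (L : Set (EuclideanSpace ℝ (Fin n))) ≤ dist K L :=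
    Metric.infDist_le_hausdorffDist_of_mem hx ConvexBody.hausdorffEdist_ne_top
  have h2 : dist x y ≤ dist K L := by rw [← hxy]; exact h1
  have h3 : ⟪x - y, u⟫ ≤ ‖u‖ * dist x y := by
    calc ⟪x - y, u⟫ ≤ ‖x - y‖ * ‖u‖ := real_inner_le_norm _ _
      _ = ‖u‖ * dist x y := by rw [dist_eq_norm]; ring
  have h4 := inner_le_sfn hy u
  have h5 : ⟪x - y, u⟫ = ⟪x, u⟫ - ⟪y, u⟫ := inner_sub_left _ _ _
  have h6 : ‖u‖ * dist x y ≤ ‖u‖ * dist K L :=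
    mul_le_mul_of_nonneg_left h2 (norm_nonneg u)
  linarith

lemma sfn_lip (u : EuclideanSpace ℝ (Fin n)) :
    LipschitzWith ‖u‖₊ (fun K : ConvexBody (EuclideanSpace ℝ (Fin n)) => sfn K u) := by
  apply LipschitzWith.of_dist_le_mul
  intro K L
  rw [Real.dist_eq, abs_sub_le_iff, coe_nnnorm]
  constructor
  · linarith [sfn_le_add K L u]
  · have := sfn_le_add L K u
    rw [dist_comm] at this
    linarith

lemma sfn_add_nonneg (P : ConvexBody (EuclideanSpace ℝ (Fin n))) (u : EuclideanSpace ℝ (Fin n)) :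
    0 ≤ sfn P u + sfn P (-u) := by
  obtain ⟨x, hx⟩ := P.nonempty
  have h1 := inner_le_sfn hx u
  have h2 := inner_le_sfn hx (-u)
  have h3 : ⟪x, -u⟫ = -⟪x, u⟫ := inner_neg_right _ _
  linarith

/-- Convex bodies in Euclidean space form a second countable space. -/
instance : SecondCountableTopology (ConvexBody (EuclideanSpace ℝ (Fin n))) := by
  let f : ConvexBody (EuclideanSpace ℝ (Fin n)) →
      TopologicalSpace.NonemptyCompacts (EuclideanSpace ℝ (Fin n)) :=
    fun K => ⟨⟨K, K.isCompact⟩, K.nonempty⟩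
  have hf : Isometry f := fun K L => ConvexBody.hausdorffEdist_coe K L
  exact hf.isEmbedding.secondCountableTopology

lemma msupport_compl_null {X : Type*} [TopologicalSpace X] [SecondCountableTopology X]
    [MeasurableSpace X] (μ : Measure X) : μ (msupport μ)ᶜ = 0 := by
  obtain ⟨T, hTc, hTsub, hTeq⟩ :=
    TopologicalSpace.isOpen_sUnion_countable {U : Set X | IsOpen U ∧ μ U = 0}
      (fun s hs => hs.1)
  refine measure_mono_null ?_ ((measure_sUnion_null_iff hTc).2 fun s hs => (hTsub hs).2)
  intro x hx
  simp only [msupport, Set.mem_compl_iff, Set.mem_setOf_eq] at hx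
  push_neg at hx
  obtain ⟨U, hUopen, hxU, hU0⟩ := hx
  rw [hTeq]
  exact ⟨U, ⟨hUopen, hU0⟩, hxU⟩

end Aux

theorem pspan_posComb_le_pspan_macroid {n : ℕ}
    [MeasurableSpace (ConvexBody (EuclideanSpace ℝ (Fin n)))]
    [BorelSpace (ConvexBody (EuclideanSpace ℝ (Fin n)))]
    (𝒦 : Set (ConvexBody (EuclideanSpace ℝ (Fin n)))) (h𝒦ne : 𝒦.Nonempty)
    (h𝒦meas : MeasurableSet 𝒦)
    (μ : Measure (ConvexBody (EuclideanSpace ℝ (Fin n)))) [IsProbabilityMeasure μ]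
    (hconc : μ 𝒦ᶜ = 0)
    (hbd : Bornology.IsBounded (𝒦 ∩ msupport μ))
    (K : ConvexBody (EuclideanSpace ℝ (Fin n)))
    (hK : ∀ u, sfn K u = ∫ P, sfn P u ∂μ)
    (Q : ConvexBody (EuclideanSpace ℝ (Fin n)))
    (hQ : ∃ (N : ℕ) (c : Fin N → ℝ≥0) (L : Fin N → ConvexBody (EuclideanSpace ℝ (Fin n))),
      (∀ i, L i ∈ 𝒦 ∩ msupport μ) ∧ Q = ∑ i, c i • L i) :
    pspan (Q : Set (EuclideanSpace ℝ (Fin n))) ≤ pspan (K : Set (EuclideanSpace ℝ (Fin n))) := by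
  obtain ⟨N, c, Lf, hLmem, hQsum⟩ := hQ
  have hcompl : μ ((𝒦 ∩ msupport μ)ᶜ) = 0 := by
    rw [Set.compl_inter]
    exact measure_union_null hconc (msupport_compl_null μ)
  have hae : ∀ᵐ P ∂μ, P ∈ 𝒦 ∩ msupport μ := by
    rw [MeasureTheory.ae_iff]
    exact hcompl
  -- core claim: for every body in the support, its pspan is contained in pspan K
  have core : ∀ L, L ∈ 𝒦 ∩ msupport μ →
      pspan (L : Set (EuclideanSpace ℝ (Fin n))) ≤ pspan (K : Set (EuclideanSpace ℝ (Fin n))) := by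
    intro L hL
    obtain ⟨C, hC⟩ := Metric.isBounded_iff.1 hbd
    obtain ⟨R₀, hR₀⟩ := L.isCompact.isBounded.exists_norm_le
    have hRbd : ∀ P ∈ 𝒦 ∩ msupport μ, ∀ x ∈ (P : Set (EuclideanSpace ℝ (Fin n))),
        ‖x‖ ≤ R₀ + C := by
      intro P hP x hx
      obtain ⟨y, hy, hxy⟩ := L.isCompact.exists_infDist_eq_dist L.nonempty x
      have h1 : Metric.infDist x (L : Set (EuclideanSpace ℝ (Fin n))) ≤ dist P L :=
        Metric.infDist_le_hausdorffDist_of_mem hx ConvexBody.hausdorffEdist_ne_top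
      have h2 : dist P L ≤ C := hC hP hL
      have h3 : ‖x‖ ≤ ‖y‖ + ‖x - y‖ := by
        have : y + (x - y) = x := by abel
        calc ‖x‖ = ‖y + (x - y)‖ := by rw [this]
          _ ≤ ‖y‖ + ‖x - y‖ := norm_add_le _ _
      have h4 : ‖x - y‖ = dist x y := (dist_eq_norm _ _).symm
      have h5 := hR₀ y hy
      rw [h4] at h3
      rw [← hxy] at *
      linarith
    have hsfnbd : ∀ u : EuclideanSpace ℝ (Fin n), ∀ P ∈ 𝒦 ∩ msupport μ,
        |sfn P u| ≤ (R₀ + C) * ‖u‖ := by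
      intro u P hP
      rw [abs_le]
      constructor
      · obtain ⟨z, hz⟩ := P.nonempty
        have h1 := inner_le_sfn hz u
        have h2 := abs_real_inner_le_norm z u
        rw [abs_le] at h2
        have h3 : ‖z‖ * ‖u‖ ≤ (R₀ + C) * ‖u‖ :=
          mul_le_mul_of_nonneg_right (hRbd P hP z hz) (norm_nonneg u)
        linarith [h2.1]
      · apply sfn_le
        intro x hx
        have h2 := real_inner_le_norm x u
        have h3 : ‖x‖ * ‖u‖ ≤ (R₀ + C) * ‖u‖ :=
          mul_le_mul_of_nonneg_right (hRbd P hP x hx) (norm_nonneg u)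
        linarith
    have hint : ∀ u : EuclideanSpace ℝ (Fin n), Integrable (fun P => sfn P u) μ := by
      intro u
      refine Integrable.mono' (integrable_const ((R₀ + C) * ‖u‖))
        ((sfn_lip u).continuous.aestronglyMeasurable) ?_
      filter_upwards [hae] with P hP
      rw [Real.norm_eq_abs]
      exact hsfnbd u P hP
    rw [pspan, Submodule.span_le]
    rintro d ⟨x, hx, y, hy, rfl⟩
    have horth : ∀ w ∈ (pspan (K : Set (EuclideanSpace ℝ (Fin n))))ᗮ, ⟪w, x - y⟫ ≤ 0 := by
      intro w hw
      by_contra hpos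
      push_neg at hpos
      have hKconst : ∀ a ∈ (K : Set (EuclideanSpace ℝ (Fin n))),
          ∀ b ∈ (K : Set (EuclideanSpace ℝ (Fin n))), ⟪a - b, w⟫ = 0 := by
        intro a ha b hb
        have hmem : a - b ∈ pspan (K : Set (EuclideanSpace ℝ (Fin n))) :=
          Submodule.subset_span (Set.sub_mem_sub ha hb)
        exact (Submodule.mem_orthogonal _ w).1 hw (a - b) hmem
      obtain ⟨x₀, hx₀⟩ := K.nonempty
      have hKw : sfn K w = ⟪x₀, w⟫ := by
        refine le_antisymm (sfn_le fun z hz => ?_) (inner_le_sfn hx₀ w)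
        have := hKconst z hz x₀ hx₀
        rw [inner_sub_left] at this
        linarith
      have hKw' : sfn K (-w) = -⟪x₀, w⟫ := by
        refine le_antisymm (sfn_le fun z hz => ?_) ?_
        · have := hKconst z hz x₀ hx₀
          rw [inner_sub_left] at this
          rw [inner_neg_right]
          linarith
        · have := inner_le_sfn hx₀ (-w)
          rwa [inner_neg_right] at this
      have hzero : ∫ P, (sfn P w + sfn P (-w)) ∂μ = 0 := by
        rw [integral_add (hint w) (hint (-w)), ← hK w, ← hK (-w), hKw, hKw']
        ring
      have hg0 : (fun P => sfn P w + sfn P (-w)) =ᵐ[μ] 0 :=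
        (integral_eq_zero_iff_of_nonneg (fun P => sfn_add_nonneg P w)
          ((hint w).add (hint (-w)))).1 hzero
      have hcont : Continuous fun P : ConvexBody (EuclideanSpace ℝ (Fin n)) =>
          sfn P w + sfn P (-w) :=
        ((sfn_lip w).continuous).add ((sfn_lip (-w)).continuous)
      set U := (fun P : ConvexBody (EuclideanSpace ℝ (Fin n)) => sfn P w + sfn P (-w)) ⁻¹'
        Set.Ioi (⟪w, x - y⟫ / 2) with hU
      have hUopen : IsOpen U := isOpen_Ioi.preimage hcont
      have hLU : L ∈ U := by
        show ⟪w, x - y⟫ / 2 < sfn L w + sfn L (-w)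
        have h1 := inner_le_sfn hx w
        have h2 := inner_le_sfn hy (-w)
        have h3 : ⟪y, -w⟫ = -⟪y, w⟫ := inner_neg_right _ _
        have h4 : ⟪w, x - y⟫ = ⟪x, w⟫ - ⟪y, w⟫ := by
          rw [real_inner_comm, inner_sub_left]
        linarith
      refine hL.2 U hUopen hLU ?_
      have hnull : μ {P | ¬ (sfn P w + sfn P (-w) = (0 : ℝ))} = 0 := by
        have := hg0
        rw [Filter.EventuallyEq, MeasureTheory.ae_iff] at this
        simpa using this
      refine measure_mono_null ?_ hnull
      intro P hP
      have hP' : ⟪w, x - y⟫ / 2 < sfn P w + sfn P (-w) := hP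
      simp only [Set.mem_setOf_eq]
      intro h
      rw [h] at hP'
      linarith
    have hmem : x - y ∈ ((pspan (K : Set (EuclideanSpace ℝ (Fin n))))ᗮ)ᗮ := by
      rw [Submodule.mem_orthogonal]
      intro w hw
      have ha := horth w hw
      have hb := horth (-w) (Submodule.neg_mem _ hw)
      rw [inner_neg_left] at hb
      linarith
    rwa [Submodule.orthogonal_orthogonal] at hmem
  -- assemble: pspan Q ≤ pspan K
  let φ : ConvexBody (EuclideanSpace ℝ (Fin n)) →+ Set (EuclideanSpace ℝ (Fin n)) :=
    { toFun := fun A => (A : Set (EuclideanSpace ℝ (Fin n)))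
      map_zero' := rfl
      map_add' := fun _ _ => rfl }
  have hcoe : (Q : Set (EuclideanSpace ℝ (Fin n))) =
      ∑ i, (c i • (Lf i : Set (EuclideanSpace ℝ (Fin n)))) := by
    rw [hQsum]
    have h := map_sum φ (fun i => c i • Lf i) Finset.univ
    simpa only [φ, AddMonoidHom.coe_mk, ZeroHom.coe_mk, ConvexBody.coe_smul'] using h
  rw [pspan, Submodule.span_le]
  rintro z ⟨q, hq, q', hq', rfl⟩
  rw [hcoe, Set.mem_finset_sum] at hq hq'
  obtain ⟨g, hg, hgsum⟩ := hq
  obtain ⟨g', hg', hgsum'⟩ := hq'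
  rw [← hgsum, ← hgsum']
  show (∑ i : Fin N, g i) - ∑ i : Fin N, g' i ∈
    (pspan (K : Set (EuclideanSpace ℝ (Fin n))) : Set (EuclideanSpace ℝ (Fin n)))
  rw [SetLike.mem_coe, ← Finset.sum_sub_distrib]
  apply Submodule.sum_mem
  intro i _
  obtain ⟨a, ha, hga⟩ := Set.mem_smul_set.1 (hg (Finset.mem_univ i))
  obtain ⟨b, hb, hgb⟩ := Set.mem_smul_set.1 (hg' (Finset.mem_univ i))
  rw [← hga, ← hgb, ← smul_sub]
  refine Submodule.smul_of_tower_mem _ (c i) ?_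
  exact core (Lf i) (hLmem i) (Submodule.subset_span (Set.sub_mem_sub ha hb))
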